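/- Let A be an n×n matrix over ℚ with irreducible characteristic polynomial f, and let p ∈ ℚ[λ]. If f(p(λ)) has a factor h(λ) of degree n in ℚ[λ], then there exists an eigenvalue μ of A (a root of f in an algebraic closure of ℚ) and an element γ ∈ ℚ(μ) such that p(γ) = μ. -/

import Mathlib

open Polynomial IntermediateField

theorem stmt2 (n : ℕ) (A : Matrix (Fin n) (Fin n) ℚ) (p : ℚ[X])
    (hf : Irreducible A.charpoly)
    (h : ℚ[X]) (hdeg : h.natDegree = n) (hdvd : h ∣ A.charpoly.comp p) :
    ∃ μ : AlgebraicClosure ℚ, aeval μ A.charpoly = 0 ∧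
      ∃ γ ∈ IntermediateField.adjoin ℚ {μ}, aeval γ p = μ := by
  have hfn : A.charpoly.natDegree = n := by
    simp [A.charpoly_natDegree_eq_dim]
  have hn : 0 < n := by
    rcases Nat.eq_zero_or_pos n with h0 | h0
    · exfalso
      have h1 : A.charpoly = 1 :=
        A.charpoly_monic.natDegree_eq_zero.1 (by omega)
      exact hf.not_isUnit (h1 ▸ isUnit_one)
    · exact h0
  have hh0 : h ≠ 0 := by
    intro h0; rw [h0] at hdeg; simp at hdeg; omega
  -- find a root γ of h in the algebraic closure
  have hdegh : h.degree ≠ 0 := by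
    rw [Polynomial.degree_eq_natDegree hh0, hdeg]
    exact_mod_cast by omega
  obtain ⟨γ, hγ⟩ := IsAlgClosed.exists_aeval_eq_zero (AlgebraicClosure ℚ) h hdegh
  set μ : AlgebraicClosure ℚ := aeval γ p with hμ
  have hroot : aeval μ A.charpoly = 0 := by
    obtain ⟨q, hq⟩ := hdvd
    have := congrArg (aeval γ) hq
    rw [Polynomial.aeval_comp] at this
    rw [← hμ] at this
    rw [this, map_mul, hγ, zero_mul]
  refine ⟨μ, hroot, γ, ?_, rfl⟩
  -- γ ∈ ℚ(μ) : since ℚ(μ) ≤ ℚ(γ) and dims force equality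
  have hint : IsIntegral ℚ γ := (show IsAlgebraic ℚ γ from ⟨h, hh0, hγ⟩).isIntegral
  have hintμ : IsIntegral ℚ μ := (show IsAlgebraic ℚ μ from ⟨A.charpoly, hf.ne_zero, hroot⟩).isIntegral
  have hminμ : minpoly ℚ μ = A.charpoly :=
    (minpoly.eq_of_irreducible_of_monic hf hroot A.charpoly_monic).symm
  have hle : adjoin ℚ {μ} ≤ adjoin ℚ {γ} := by
    rw [adjoin_le_iff]
    intro x hx
    rcases hx with rfl
    exact (IntermediateField.algebra_adjoin_le_adjoin ℚ {γ})
      (Polynomial.aeval_mem_adjoin_singleton ℚ γ)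
  have hfd1 : FiniteDimensional ℚ (adjoin ℚ {γ} : IntermediateField ℚ (AlgebraicClosure ℚ)) :=
    IntermediateField.adjoin.finiteDimensional hint
  have hfr1 : Module.finrank ℚ (adjoin ℚ {γ} : IntermediateField ℚ (AlgebraicClosure ℚ)) ≤ n := by
    rw [IntermediateField.adjoin.finrank hint]
    calc (minpoly ℚ γ).natDegree ≤ h.natDegree :=
          Polynomial.natDegree_le_of_dvd (minpoly.dvd ℚ γ hγ) hh0
      _ = n := hdeg
  have hfr2 : Module.finrank ℚ (adjoin ℚ {μ} : IntermediateField ℚ (AlgebraicClosure ℚ)) = n := by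
    rw [IntermediateField.adjoin.finrank hintμ, hminμ, hfn]
  have heq : adjoin ℚ {μ} = adjoin ℚ {γ} :=
    IntermediateField.eq_of_le_of_finrank_le hle (by rw [hfr2]; exact hfr1)
  rw [heq]
  exact IntermediateField.mem_adjoin_simple_self ℚ γ
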